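/- Let k = (k_m,…,k_0)₂ and n = 2k, with ε_j ∈ F₂^k defined by (ε_j)_i = 1 iff i ⪯ j for 0 ≤ i ≤ k−1. For any 0 ≤ p ≤ m+1, Σ_{j ∈ A_p, j ⪯ k} ε_j = Σ_{j ∈ A_p, j ⪯ k} ε_{n−j}, where A_p = {k} if p = 0 and A_p = {ω ∈ {0,…,n} : |ω − k| is an odd multiple of 2^{p−1}} for p ≥ 1, and sums are over F₂. -/

import Mathlib

open scoped Classical

/-- Bitwise domination: every bit of `a` is ≤ the corresponding bit of `b`. -/
def Pre (a b : ℕ) : Prop := ∀ t, a.testBit t = true → b.testBit t = true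

lemma pre_zero_left (b : ℕ) : Pre 0 b := by
  intro t ht; simp [Nat.zero_testBit] at ht

lemma pre_refl (a : ℕ) : Pre a a := fun _ h => h

lemma pre_iff (a b : ℕ) : Pre a b ↔ (a % 2 = 1 → b % 2 = 1) ∧ Pre (a/2) (b/2) := by
  constructor
  · intro h
    refine ⟨fun ha => ?_, fun t ht => ?_⟩
    · have := h 0 (by simp [Nat.testBit_zero, ha])
      simpa [Nat.testBit_zero] using this
    · have := h (t+1) (by simpa [Nat.testBit_succ] using ht)
      simpa [Nat.testBit_succ] using this
  · rintro ⟨h0, h1⟩ t ht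
    cases t with
    | zero =>
      simp only [Nat.testBit_zero, decide_eq_true_eq] at ht ⊢
      exact h0 ht
    | succ t =>
      simp only [Nat.testBit_succ] at ht ⊢
      exact h1 t ht

lemma pre_le {a b : ℕ} (h : Pre a b) : a ≤ b := by
  induction a using Nat.strong_induction_on generalizing b with
  | _ a IH =>
    rcases Nat.eq_zero_or_pos a with rfl | ha
    · exact Nat.zero_le b
    · obtain ⟨h0, h1⟩ := (pre_iff a b).mp h
      have := IH (a/2) (Nat.div_lt_self ha (by norm_num)) h1
      omega

lemma pre_two_mul {a b : ℕ} : Pre a (2*b) ↔ a % 2 = 0 ∧ Pre (a/2) b := by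
  rw [pre_iff]
  constructor
  · rintro ⟨h0, h1⟩
    refine ⟨by omega, by simpa using h1⟩
  · rintro ⟨h0, h1⟩
    exact ⟨by omega, by simpa using h1⟩

lemma pre_two_mul_add_one {a b : ℕ} : Pre a (2*b+1) ↔ Pre (a/2) b := by
  rw [pre_iff]
  have hb : (2*b+1)/2 = b := by omega
  rw [hb]
  constructor
  · rintro ⟨h0, h1⟩; exact h1
  · intro h1
    exact ⟨fun _ => by omega, h1⟩

lemma pre_sub {d H : ℕ} (h : Pre d H) : Pre (H - d) H := by
  induction H using Nat.strong_induction_on generalizing d with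
  | _ H IH =>
    rcases Nat.eq_zero_or_pos H with rfl | hH
    · have hd := pre_le h
      have : d = 0 := by omega
      subst this; simpa using h
    · obtain ⟨h0, h1⟩ := (pre_iff d H).mp h
      have hd2 : d / 2 ≤ H / 2 := pre_le h1
      have hd : d ≤ H := pre_le h
      have hrec := IH (H/2) (Nat.div_lt_self hH (by norm_num)) h1
      rw [pre_iff]
      constructor
      · intro hm; omega
      · have : (H - d) / 2 = H/2 - d/2 := by omega
        rw [this]; exact hrec
noncomputable def SM (H : ℕ) : Finset ℕ := (Finset.range (H+1)).filter (fun e => Pre e H)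

lemma mem_SM {e H : ℕ} : e ∈ SM H ↔ Pre e H := by
  simp only [SM, Finset.mem_filter, Finset.mem_range]
  exact ⟨fun h => h.2, fun h => ⟨Nat.lt_succ_of_le (pre_le h), h⟩⟩

lemma SM_even (H : ℕ) : SM (2*H) = (SM H).image (fun e => 2*e) := by
  ext x
  simp only [mem_SM, Finset.mem_image]
  constructor
  · intro h
    obtain ⟨h0, h1⟩ := pre_two_mul.mp h
    exact ⟨x/2, h1, by omega⟩
  · rintro ⟨e, he, rfl⟩
    exact pre_two_mul.mpr ⟨by omega, by simpa using he⟩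

lemma SM_odd (H : ℕ) :
    SM (2*H+1) = (SM H).image (fun e => 2*e) ∪ (SM H).image (fun e => 2*e+1) := by
  ext x
  simp only [mem_SM, Finset.mem_union, Finset.mem_image]
  constructor
  · intro h
    have h1 := pre_two_mul_add_one.mp h
    rcases Nat.mod_two_eq_zero_or_one x with hx | hx
    · exact Or.inl ⟨x/2, h1, by omega⟩
    · exact Or.inr ⟨x/2, h1, by omega⟩
  · rintro (⟨e, he, rfl⟩ | ⟨e, he, rfl⟩)
    · exact pre_two_mul_add_one.mpr (by simpa using he)
    · refine pre_two_mul_add_one.mpr ?_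
      have h2 : (2*e+1)/2 = e := by omega
      rw [h2]; exact he

lemma sum_SM_even (H : ℕ) (f : ℕ → ZMod 2) :
    ∑ e ∈ SM (2*H), f e = ∑ e ∈ SM H, f (2*e) := by
  rw [SM_even, Finset.sum_image (by intro x _ y _ h; simp only at h; omega)]

lemma sum_SM_odd (H : ℕ) (f : ℕ → ZMod 2) :
    ∑ e ∈ SM (2*H+1), f e = ∑ e ∈ SM H, (f (2*e) + f (2*e+1)) := by
  rw [SM_odd, Finset.sum_union, Finset.sum_image (by intro x _ y _ h; simp only at h; omega),
    Finset.sum_image (by intro x _ y _ h; simp only at h; omega), ← Finset.sum_add_distrib]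
  rw [Finset.disjoint_left]
  intro a ha hb
  simp only [Finset.mem_image] at ha hb
  obtain ⟨x, _, rfl⟩ := ha
  obtain ⟨y, _, hy⟩ := hb
  omega

lemma key (H : ℕ) : ∀ a ≤ H,
    ((∑ e ∈ SM H, if Pre a (H - e) then (1:ZMod 2) else 0) = if a = H then 1 else 0)
    ∧ ((∑ e ∈ SM H, if Pre a (H + e) then (1:ZMod 2) else 0) = if a = H then 1 else 0)
    ∧ ((∑ e ∈ SM H, if Pre a (H + e + 1) then (1:ZMod 2) else 0) = if a = H then 1 else 0) := by
  induction H using Nat.strong_induction_on with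
  | _ H IH =>
    intro a ha
    rcases Nat.eq_zero_or_pos H with rfl | hH
    · interval_cases a
      have h0 : SM 0 = {0} := by
        ext x; simp only [mem_SM, Finset.mem_singleton]
        exact ⟨fun h => by have := pre_le h; omega, fun h => h ▸ pre_refl 0⟩
      refine ⟨?_, ?_, ?_⟩ <;> simp [h0, pre_refl, pre_zero_left]
    · rcases Nat.even_or_odd H with ⟨H2, hH2⟩ | ⟨H2, hH2⟩
      · -- H = 2*H2
        have hHe : H = 2 * H2 := by omega
        subst hHe
        have hlt : H2 < 2 * H2 := by omega
        refine ⟨?_, ?_, ?_⟩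
        · -- minus
          rw [sum_SM_even]
          have : ∀ e ∈ SM H2, (if Pre a (2*H2 - 2*e) then (1:ZMod 2) else 0)
              = if a % 2 = 0 ∧ Pre (a/2) (H2 - e) then 1 else 0 := by
            intro e he
            have he' : e ≤ H2 := pre_le (mem_SM.mp he)
            have h2 : 2*H2 - 2*e = 2*(H2 - e) := by omega
            rw [h2]; simp only [pre_two_mul]
          rw [Finset.sum_congr rfl this]
          rcases Nat.mod_two_eq_zero_or_one a with haa | haa
          · have h0 : a % 2 = 0 := by omega
            have : ∀ e ∈ SM H2, (if a % 2 = 0 ∧ Pre (a/2) (H2 - e) then (1:ZMod 2) else 0)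
                = if Pre (a/2) (H2 - e) then 1 else 0 := by
              intro e _; simp [h0]
            rw [Finset.sum_congr rfl this, (IH H2 hlt (a/2) (by omega)).1]
            have : a/2 = H2 ↔ a = 2*H2 := by omega
            simp [this]
          · have h0 : ¬ (a % 2 = 0) := by omega
            have h1 : ¬ (a = 2*H2) := by omega
            simp [h0, h1]
        · -- plus
          rw [sum_SM_even]
          have : ∀ e ∈ SM H2, (if Pre a (2*H2 + 2*e) then (1:ZMod 2) else 0)
              = if a % 2 = 0 ∧ Pre (a/2) (H2 + e) then 1 else 0 := by
            intro e _
            have h2 : 2*H2 + 2*e = 2*(H2 + e) := by omega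
            rw [h2]; simp only [pre_two_mul]
          rw [Finset.sum_congr rfl this]
          rcases Nat.mod_two_eq_zero_or_one a with haa | haa
          · have h0 : a % 2 = 0 := by omega
            have : ∀ e ∈ SM H2, (if a % 2 = 0 ∧ Pre (a/2) (H2 + e) then (1:ZMod 2) else 0)
                = if Pre (a/2) (H2 + e) then 1 else 0 := by
              intro e _; simp [h0]
            rw [Finset.sum_congr rfl this, (IH H2 hlt (a/2) (by omega)).2.1]
            have : a/2 = H2 ↔ a = 2*H2 := by omega
            simp [this]
          · have h0 : ¬ (a % 2 = 0) := by omega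
            have h1 : ¬ (a = 2*H2) := by omega
            simp [h0, h1]
        · -- plus one
          rw [sum_SM_even]
          have : ∀ e ∈ SM H2, (if Pre a (2*H2 + 2*e + 1) then (1:ZMod 2) else 0)
              = if Pre (a/2) (H2 + e) then 1 else 0 := by
            intro e _
            have h2 : 2*H2 + 2*e + 1 = 2*(H2 + e) + 1 := by omega
            rw [h2]; simp only [pre_two_mul_add_one]
          rw [Finset.sum_congr rfl this, (IH H2 hlt (a/2) (by omega)).2.1]
          rcases Nat.mod_two_eq_zero_or_one a with haa | haa
          · have : a/2 = H2 ↔ a = 2*H2 := by omega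
            simp [this]
          · have h1 : ¬ (a/2 = H2) := by omega
            have h2 : ¬ (a = 2*H2) := by omega
            simp [h1, h2]
      · -- H = 2*H2 + 1
        have hHe : H = 2 * H2 + 1 := by omega
        subst hHe
        have hlt : H2 < 2 * H2 + 1 := by omega
        refine ⟨?_, ?_, ?_⟩
        · -- minus
          rw [sum_SM_odd]
          have : ∀ e ∈ SM H2, ((if Pre a (2*H2+1 - 2*e) then (1:ZMod 2) else 0)
                + if Pre a (2*H2+1 - (2*e+1)) then (1:ZMod 2) else 0)
              = (if Pre (a/2) (H2 - e) then 1 else 0)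
                + if a % 2 = 0 ∧ Pre (a/2) (H2 - e) then 1 else 0 := by
            intro e he
            have he' : e ≤ H2 := pre_le (mem_SM.mp he)
            have h2 : 2*H2+1 - 2*e = 2*(H2 - e) + 1 := by omega
            have h3 : 2*H2+1 - (2*e+1) = 2*(H2 - e) := by omega
            rw [h2, h3]; simp only [pre_two_mul, pre_two_mul_add_one]
          rw [Finset.sum_congr rfl this, Finset.sum_add_distrib]
          rcases Nat.mod_two_eq_zero_or_one a with haa | haa
          · have h0 : a % 2 = 0 := by omega
            have : ∀ e ∈ SM H2, (if a % 2 = 0 ∧ Pre (a/2) (H2 - e) then (1:ZMod 2) else 0)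
                = if Pre (a/2) (H2 - e) then 1 else 0 := by
              intro e _; simp [h0]
            rw [Finset.sum_congr rfl this]
            have h1 : ¬ (a = 2*H2+1) := by omega
            have hz : ∀ x : ZMod 2, x + x = 0 := by decide
            simp [h1, hz]
          · have h0 : ¬ (a % 2 = 0) := by omega
            have : ∀ e ∈ SM H2, (if a % 2 = 0 ∧ Pre (a/2) (H2 - e) then (1:ZMod 2) else 0)
                = 0 := by intro e _; simp [h0]
            rw [Finset.sum_congr rfl this, Finset.sum_const_zero, add_zero,
              (IH H2 hlt (a/2) (by omega)).1]
            have : a/2 = H2 ↔ a = 2*H2+1 := by omega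
            simp [this]
        · -- plus : terms e=2e' : 2*(H2+e')+1 ; e=2e'+1 : 2*(H2+e'+1)
          rw [sum_SM_odd]
          have : ∀ e ∈ SM H2, ((if Pre a (2*H2+1 + 2*e) then (1:ZMod 2) else 0)
                + if Pre a (2*H2+1 + (2*e+1)) then (1:ZMod 2) else 0)
              = (if Pre (a/2) (H2 + e) then 1 else 0)
                + if a % 2 = 0 ∧ Pre (a/2) (H2 + e + 1) then 1 else 0 := by
            intro e _
            have h2 : 2*H2+1 + 2*e = 2*(H2 + e) + 1 := by omega
            have h3 : 2*H2+1 + (2*e+1) = 2*(H2 + e + 1) := by omega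
            rw [h2, h3]; simp only [pre_two_mul, pre_two_mul_add_one]
          rw [Finset.sum_congr rfl this, Finset.sum_add_distrib]
          rcases Nat.mod_two_eq_zero_or_one a with haa | haa
          · have h0 : a % 2 = 0 := by omega
            have : ∀ e ∈ SM H2, (if a % 2 = 0 ∧ Pre (a/2) (H2 + e + 1) then (1:ZMod 2) else 0)
                = if Pre (a/2) (H2 + e + 1) then 1 else 0 := by
              intro e _; simp [h0]
            rw [Finset.sum_congr rfl this, (IH H2 hlt (a/2) (by omega)).2.1,
              (IH H2 hlt (a/2) (by omega)).2.2]
            have h1 : ¬ (a = 2*H2+1) := by omega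
            have hz : ∀ x : ZMod 2, x + x = 0 := by decide
            simp [h1, hz]
          · have h0 : ¬ (a % 2 = 0) := by omega
            have : ∀ e ∈ SM H2, (if a % 2 = 0 ∧ Pre (a/2) (H2 + e + 1) then (1:ZMod 2) else 0)
                = 0 := by intro e _; simp [h0]
            rw [Finset.sum_congr rfl this, Finset.sum_const_zero, add_zero,
              (IH H2 hlt (a/2) (by omega)).2.1]
            have : a/2 = H2 ↔ a = 2*H2+1 := by omega
            simp [this]
        · -- plus one : e=2e' : 2*(H2+e'+1) ; e=2e'+1 : 2*(H2+e'+1)+1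
          rw [sum_SM_odd]
          have : ∀ e ∈ SM H2, ((if Pre a (2*H2+1 + 2*e + 1) then (1:ZMod 2) else 0)
                + if Pre a (2*H2+1 + (2*e+1) + 1) then (1:ZMod 2) else 0)
              = (if a % 2 = 0 ∧ Pre (a/2) (H2 + e + 1) then 1 else 0)
                + if Pre (a/2) (H2 + e + 1) then 1 else 0 := by
            intro e _
            have h2 : 2*H2+1 + 2*e + 1 = 2*(H2 + e + 1) := by omega
            have h3 : 2*H2+1 + (2*e+1) + 1 = 2*(H2 + e + 1) + 1 := by omega
            rw [h2, h3]; simp only [pre_two_mul, pre_two_mul_add_one]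
          rw [Finset.sum_congr rfl this, Finset.sum_add_distrib]
          rcases Nat.mod_two_eq_zero_or_one a with haa | haa
          · have h0 : a % 2 = 0 := by omega
            have : ∀ e ∈ SM H2, (if a % 2 = 0 ∧ Pre (a/2) (H2 + e + 1) then (1:ZMod 2) else 0)
                = if Pre (a/2) (H2 + e + 1) then 1 else 0 := by
              intro e _; simp [h0]
            rw [Finset.sum_congr rfl this]
            have h1 : ¬ (a = 2*H2+1) := by omega
            have hz : ∀ x : ZMod 2, x + x = 0 := by decide
            simp [h1, hz]
          · have h0 : ¬ (a % 2 = 0) := by omega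
            have : ∀ e ∈ SM H2, (if a % 2 = 0 ∧ Pre (a/2) (H2 + e + 1) then (1:ZMod 2) else 0)
                = 0 := by intro e _; simp [h0]
            rw [Finset.sum_congr rfl this, Finset.sum_const_zero, zero_add,
              (IH H2 hlt (a/2) (by omega)).2.2]
            have : a/2 = H2 ↔ a = 2*H2+1 := by omega
            simp [this]
lemma pre_decomp (s : ℕ) : ∀ A y x : ℕ, y < 2^s →
    (Pre x (A * 2^s + y) ↔ Pre (x % 2^s) y ∧ Pre (x / 2^s) A) := by
  induction s with
  | zero =>
    intro A y x hy
    have hy0 : y = 0 := by omega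
    subst hy0
    simp only [pow_zero, mul_one, add_zero, Nat.mod_one, Nat.div_one]
    exact ⟨fun h => ⟨pre_zero_left 0, h⟩, fun h => h.2⟩
  | succ s IH =>
    intro A y x hy
    have hkey : A * 2^(s+1) + y = 2*(A*2^s + y/2) + y % 2 := by
      have h1 : A * 2^(s+1) = 2*(A*2^s) := by ring
      omega
    have hm1 : (x % 2^(s+1)) % 2 = x % 2 := Nat.mod_mod_of_dvd x (dvd_pow_self 2 (Nat.succ_ne_zero s))
    have hm2 : (x % 2^(s+1)) / 2 = (x/2) % 2^s := by
      have := Nat.mod_mul_right_div_self x 2 (2^s)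
      have h2 : 2 * 2^s = 2^(s+1) := by ring
      rw [h2] at this
      exact this
    have hm3 : x / 2^(s+1) = (x/2) / 2^s := by
      rw [Nat.div_div_eq_div_mul]
      congr 1
      ring
    have hy2 : y / 2 < 2^s := by omega
    rw [hkey, hm3]
    have hR : Pre (x % 2^(s+1)) y ↔ ((x % 2 = 1 → y % 2 = 1) ∧ Pre ((x/2) % 2^s) (y/2)) := by
      rw [pre_iff, hm1, hm2]
    rw [hR]
    rcases Nat.mod_two_eq_zero_or_one y with h0 | h0
    · rw [h0, add_zero, pre_two_mul, IH A (y/2) (x/2) hy2]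
      constructor
      · rintro ⟨ha, hb, hc⟩; exact ⟨⟨fun h => by omega, hb⟩, hc⟩
      · rintro ⟨⟨ha, hb⟩, hc⟩
        refine ⟨?_, hb, hc⟩
        by_contra h
        have : x % 2 = 1 := by omega
        have := ha this; omega
    · rw [h0, pre_two_mul_add_one, IH A (y/2) (x/2) hy2]
      constructor
      · rintro ⟨hb, hc⟩; exact ⟨⟨fun _ => rfl, hb⟩, hc⟩
      · rintro ⟨⟨_, hb⟩, hc⟩; exact ⟨hb, hc⟩
lemma md2 (s A y : ℕ) (hy : y < 2^s) : (A * 2^s + y) / 2^s = A := by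
  rw [mul_comm, Nat.mul_add_div (Nat.two_pow_pos s), Nat.div_eq_of_lt hy, add_zero]

lemma md1 (s A y : ℕ) (hy : y < 2^s) : (A * 2^s + y) % 2^s = y := by
  rw [mul_comm, Nat.mul_add_mod, Nat.mod_eq_of_lt hy]

lemma pre_L (b L : ℕ) (hL : L < 2^b) : Pre L (2^b + L) := by
  have h := (pre_decomp b 1 L L hL).mpr
    ⟨by rw [Nat.mod_eq_of_lt hL]; exact pre_refl L,
     by rw [Nat.div_eq_of_lt hL]; exact pre_zero_left 1⟩
  simpa using h

/-- The vector `ε_i ∈ F₂^k` whose `j`-th coordinate is `1` iff `j ⪯ i`. -/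
noncomputable def eps (k : ℕ) (i : ℕ) : Fin k → ZMod 2 :=
  fun j => if Pre j.val i then 1 else 0
/-- `Aset k i`: for `i = 0` just `{k}`; for `i ≥ 1` the set of `ω ∈ {0,…,2k}`
whose distance to `k` is an odd multiple of `2^(i-1)`. -/
noncomputable def Aset (k i : ℕ) : Finset ℕ :=
  if i = 0 then {k}
  else (Finset.range (2*k+1)).filter (fun ω => ∃ j, Nat.dist ω k = (2*j+1) * 2^(i-1))

theorem stmt18 (k : ℕ) (hk : 0 < k) (n : ℕ) (hn : n = 2 * k)
    (m : ℕ) (hm : m = Nat.log 2 k) :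
    ∀ p ≤ m + 1,
      ∑ j ∈ (Aset k p).filter (fun j => Pre j k), eps k j =
      ∑ j ∈ (Aset k p).filter (fun j => Pre j k), eps k (n - j) := by
  subst hn
  intro p _
  cases p with
  | zero =>
    have h0 : Aset k 0 = {k} := by simp [Aset]
    rw [h0]
    have h1 : ({k} : Finset ℕ).filter (fun j => Pre j k) = {k} := by
      rw [Finset.filter_singleton, if_pos (pre_refl k)]
    rw [h1, Finset.sum_singleton, Finset.sum_singleton]
    have h2 : 2*k - k = k := by omega
    rw [h2]
  | succ b =>
    have hA : Aset k (b+1) = (Finset.range (2*k+1)).filter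
        (fun ω => ∃ j, Nat.dist ω k = (2*j+1) * 2^b) := by
      simp [Aset]
    by_cases hb : k.testBit b
    case neg =>
      have hempty : (Aset k (b+1)).filter (fun j => Pre j k) = ∅ := by
        rw [Finset.filter_eq_empty_iff]
        intro ω hω hpre
        rw [hA, Finset.mem_filter] at hω
        obtain ⟨-, j, hdist⟩ := hω
        have hωk : ω ≤ k := pre_le hpre
        rw [Nat.dist_eq_sub_of_le hωk] at hdist
        have hd : Pre (k - ω) k := pre_sub hpre
        have htb : (k-ω).testBit b = true := by
          rw [Nat.testBit_eq_decide_div_mod_eq]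
          have h1 : (k - ω) / 2^b = 2*j+1 := by
            rw [hdist]; exact Nat.mul_div_cancel _ (Nat.two_pow_pos b)
          rw [h1]; simp
        exact hb (hd b htb)
      rw [hempty]; simp
    case pos =>
      set H := k / 2^(b+1) with hHdef
      set L := k % 2^b with hLdef
      have hLlt : L < 2^b := Nat.mod_lt _ (Nat.two_pow_pos b)
      have h3 : k / 2^b % 2 = 1 := by
        have h := hb; rw [Nat.testBit_eq_decide_div_mod_eq] at h; simpa using h
      have h4 : k = 2^b * (k / 2^b) + L := (Nat.div_add_mod k (2^b)).symm
      have h6 : k / 2^b / 2 = H := by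
        rw [Nat.div_div_eq_div_mul, ← pow_succ, hHdef]
      have h5 : k / 2^b = 2 * H + 1 := by omega
      have hkd : k = H * 2^(b+1) + (2^b + L) := by
        rw [h5] at h4
        rw [h4, pow_succ]; ring
      have hyL : 2^b + L < 2^(b+1) := by omega
      have hsub : ∀ e, e ≤ H → k - (e * 2^(b+1) + 2^b) = (H - e) * 2^(b+1) + L := by
        intro e he
        have h1 : (H - e) * 2^(b+1) = H * 2^(b+1) - e * 2^(b+1) := Nat.sub_mul H e _
        have h2 : e * 2^(b+1) ≤ H * 2^(b+1) := Nat.mul_le_mul_right _ he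
        omega
      have hDk : ∀ e, e ≤ H → e * 2^(b+1) + 2^b ≤ k := by
        intro e he
        have h2 : e * 2^(b+1) ≤ H * 2^(b+1) := Nat.mul_le_mul_right _ he
        omega
      have hS : (Aset k (b+1)).filter (fun j => Pre j k)
          = (SM H).image (fun e => k - (e * 2^(b+1) + 2^b)) := by
        ext ω
        rw [Finset.mem_filter, hA, Finset.mem_filter, Finset.mem_range, Finset.mem_image]
        constructor
        · rintro ⟨⟨hr, j, hdist⟩, hpre⟩
          have hωk : ω ≤ k := pre_le hpre
          rw [Nat.dist_eq_sub_of_le hωk] at hdist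
          have hde : k - ω = j * 2^(b+1) + 2^b := by
            rw [hdist, pow_succ]; ring
          refine ⟨j, ?_, by omega⟩
          have hd : Pre (k - ω) k := pre_sub hpre
          rw [hde, hkd] at hd
          have hdec := (pre_decomp (b+1) H (2^b+L) (j*2^(b+1)+2^b) hyL).mp hd
          rw [mem_SM]
          rw [md2 (b+1) j (2^b) (by omega)] at hdec
          exact hdec.2
        · rintro ⟨e, he, rfl⟩
          rw [mem_SM] at he
          have heH : e ≤ H := pre_le he
          have hD := hDk e heH
          refine ⟨⟨by omega, e, ?_⟩, ?_⟩
          · rw [Nat.dist_eq_sub_of_le (by omega)]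
            have h7 : (2*e+1)*2^b = e*2^(b+1)+2^b := by rw [pow_succ]; ring
            omega
          · rw [hsub e heH, hkd]
            refine (pre_decomp (b+1) H (2^b+L) _ hyL).mpr ⟨?_, ?_⟩
            · rw [md1 (b+1) (H-e) L (by omega)]
              exact pre_L b L hLlt
            · rw [md2 (b+1) (H-e) L (by omega)]
              exact pre_sub he
      rw [hS]
      have hinj : ∀ x ∈ SM H, ∀ y ∈ SM H,
          k - (x * 2^(b+1) + 2^b) = k - (y * 2^(b+1) + 2^b) → x = y := by
        intro x hx y hy hxy
        have hx' := hDk x (pre_le (mem_SM.mp hx))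
        have hy' := hDk y (pre_le (mem_SM.mp hy))
        have h1 : x * 2^(b+1) = y * 2^(b+1) := by omega
        exact Nat.eq_of_mul_eq_mul_right (Nat.two_pow_pos _) h1
      rw [Finset.sum_image hinj, Finset.sum_image hinj]
      funext i
      simp only [Finset.sum_apply]
      have ha : (i : ℕ) / 2^(b+1) ≤ H := Nat.div_le_div_right (le_of_lt i.isLt)
      have lhs_eq : ∀ e ∈ SM H, eps k (k - (e * 2^(b+1) + 2^b)) i
          = if Pre ((i:ℕ) % 2^(b+1)) L ∧ Pre ((i:ℕ)/2^(b+1)) (H - e) then 1 else 0 := by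
        intro e he
        have heH := pre_le (mem_SM.mp he)
        simp only [eps]
        rw [hsub e heH]
        simp only [pre_decomp (b+1) (H-e) L ((i:ℕ)) (by omega : L < 2^(b+1))]
      have rhs_eq : ∀ e ∈ SM H, eps k (2*k - (k - (e * 2^(b+1) + 2^b))) i
          = if Pre ((i:ℕ) % 2^(b+1)) L ∧ Pre ((i:ℕ)/2^(b+1)) (H + e + 1) then 1 else 0 := by
        intro e he
        have heH := pre_le (mem_SM.mp he)
        have hD := hDk e heH
        have hplus : 2*k - (k - (e * 2^(b+1) + 2^b)) = (H + e + 1) * 2^(b+1) + L := by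
          have h1 : (H + e + 1) * 2^(b+1) = H * 2^(b+1) + e * 2^(b+1) + 2^(b+1) := by ring
          omega
        simp only [eps]
        rw [hplus]
        simp only [pre_decomp (b+1) (H+e+1) L ((i:ℕ)) (by omega : L < 2^(b+1))]
      rw [Finset.sum_congr rfl lhs_eq, Finset.sum_congr rfl rhs_eq]
      by_cases hc : Pre ((i:ℕ) % 2^(b+1)) L
      · simp only [hc, true_and]
        rw [(key H ((i:ℕ)/2^(b+1)) ha).1, (key H ((i:ℕ)/2^(b+1)) ha).2.2]
      · simp [hc]
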